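/- arXiv:1108.3351 — 15 statements merged into one kernel-verified Lean document; each statement's English description precedes it below -/
import Mathlib

section
/- If θ : V(D₂) → V(D₁) is a compression map between reflexive directed graphs, and x, y, z ∈ V(D₂) satisfy xy, yz ∈ A(D₂) with (θ(x), θ(y), θ(z)) a transitive triple in D₁, then (x, y, z) is a transitive triple in D₂. -/
def Reflexive' {V : Type*} (A : V → V → Prop) : Prop := ∀ v, A v v

def Transitive' {V : Type*} (A : V → V → Prop) : Prop :=
  ∀ x y z, A x y → A y z → A x z

def Preordered {V : Type*} (A : V → V → Prop) : Prop :=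
  Reflexive' A ∧ Transitive' A

def BalancedGraph {V : Type*} (A : V → V → Prop) : Prop :=
  ∀ w x y z, A w x → A x y → A y z → A w z → (A w y ↔ A x z)

def Stable {V : Type*} (A : V → V → Prop) : Prop :=
  BalancedGraph A ∧ ∀ a b c d : V, a ≠ b → a ≠ c → a ≠ d → b ≠ c → b ≠ d → c ≠ d →
    A a b → A a c → A b c → A b d → A c d → A a d

def TransTriple {V : Type*} (A : V → V → Prop) (a b c : V) : Prop :=
  A a b ∧ A b c ∧ A a c

def IsClasp {V : Type*} (A : V → V → Prop) (x : V) : Prop :=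
  ∃ w y, w ≠ x ∧ y ≠ x ∧ A w x ∧ A x y ∧ ¬ A w y

def IsLockedClasp {V : Type*} (A : V → V → Prop) (x : V) : Prop :=
  ∃ u v w y, u ≠ x ∧ v ≠ x ∧ w ≠ x ∧ y ≠ x ∧
    TransTriple A u x y ∧ TransTriple A u x v ∧ TransTriple A w x v ∧ ¬ A w y

def Soloist {V : Type*} (A : V → V → Prop) (s : V) : Prop :=
  ∀ r, r ≠ s → ¬ (A r s ∧ A s r)

/-- A compression map between (reflexive) directed graphs, given by arrow
relations `A₂` on `V₂` and `A₁` on `V₁`: a surjection preserving arrows,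
lifting transitive triples, and inducing a bijection between the arrows
between distinct vertices. -/
def IsCompression {V₂ V₁ : Type*} (A₂ : V₂ → V₂ → Prop) (A₁ : V₁ → V₁ → Prop)
    (θ : V₂ → V₁) : Prop :=
  Function.Surjective θ ∧
  (∀ x y, A₂ x y → A₁ (θ x) (θ y)) ∧
  (∀ a b c, TransTriple A₁ a b c →
    ∃ x y z, TransTriple A₂ x y z ∧ θ x = a ∧ θ y = b ∧ θ z = c) ∧
  (∀ x y, x ≠ y → A₂ x y → θ x ≠ θ y) ∧
  (∀ x y x' y', x ≠ y → x' ≠ y' → A₂ x y → A₂ x' y' →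
    θ x = θ x' → θ y = θ y' → x = x' ∧ y = y') ∧
  (∀ a b, a ≠ b → A₁ a b → ∃ x y, x ≠ y ∧ A₂ x y ∧ θ x = a ∧ θ y = b)

theorem stmt0 {V₂ V₁ : Type*} (A₂ : V₂ → V₂ → Prop) (A₁ : V₁ → V₁ → Prop)
    (θ : V₂ → V₁) (h₂ : Reflexive' A₂) (h₁ : Reflexive' A₁)
    (hθ : IsCompression A₂ A₁ θ) (x y z : V₂)
    (hxy : A₂ x y) (hyz : A₂ y z)
    (ht : TransTriple A₁ (θ x) (θ y) (θ z)) :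
    TransTriple A₂ x y z := by
  obtain ⟨hsurj, hpres, hlift, hinj1, hinj2, hsur2⟩ := hθ
  refine ⟨hxy, hyz, ?_⟩
  by_cases hxy1 : θ x = θ y
  · by_cases hxyeq : x = y
    · subst hxyeq; exact hyz
    · exact absurd hxy1 (hinj1 x y hxyeq hxy)
  · by_cases hyz1 : θ y = θ z
    · by_cases hyzeq : y = z
      · subst hyzeq; exact hxy
      · exact absurd hyz1 (hinj1 y z hyzeq hyz)
    · obtain ⟨x', y', z', ⟨hxy', hyz', hxz'⟩, hx, hy, hz⟩ := hlift _ _ _ ht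
      have hxyne : x ≠ y := fun h => hxy1 (by rw [h])
      have hyzne : y ≠ z := fun h => hyz1 (by rw [h])
      have hxyne' : x' ≠ y' := fun h => hxy1 (by rw [← hx, ← hy, h])
      have hyzne' : y' ≠ z' := fun h => hyz1 (by rw [← hy, ← hz, h])
      obtain ⟨ex, ey⟩ := hinj2 x y x' y' hxyne hxyne' hxy hxy' hx.symm hy.symm
      obtain ⟨_, ez⟩ := hinj2 y z y' z' hyzne hyzne' hyz hyz' hy.symm hz.symm
      rw [ex, ez]; exact hxz'
end

section
/- If θ : V(D₂) → V(D₁) is a compression map between reflexive directed graphs and D₁ is preordered (reflexive and transitive), then D₂ is preordered. -/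
theorem stmt1 {V₂ V₁ : Type*} (A₂ : V₂ → V₂ → Prop) (A₁ : V₁ → V₁ → Prop)
    (θ : V₂ → V₁) (h₂ : Reflexive' A₂) (h₁ : Reflexive' A₁)
    (hθ : IsCompression A₂ A₁ θ) (hpre : Preordered A₁) :
    Preordered A₂ := by
  obtain ⟨hsurj, hmap, hlift, hinj, huniq, hfill⟩ := hθ
  refine ⟨h₂, ?_⟩
  intro x y z hxy hyz
  by_cases hxy' : x = y
  · rwa [hxy']
  by_cases hyz' : y = z
  · rwa [← hyz']
  have htri : TransTriple A₁ (θ x) (θ y) (θ z) :=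
    ⟨hmap _ _ hxy, hmap _ _ hyz, hpre.2 _ _ _ (hmap _ _ hxy) (hmap _ _ hyz)⟩
  obtain ⟨x', y', z', ⟨hx'y', hy'z', hx'z'⟩, ex, ey, ez⟩ := hlift _ _ _ htri
  have hx'y'ne : x' ≠ y' := fun h => hinj x y hxy' hxy (by rw [← ex, ← ey, h])
  have hy'z'ne : y' ≠ z' := fun h => hinj y z hyz' hyz (by rw [← ey, ← ez, h])
  obtain ⟨e1, e2⟩ := huniq x y x' y' hxy' hx'y'ne hxy hx'y' ex.symm ey.symm
  obtain ⟨e3, e4⟩ := huniq y z y' z' hyz' hy'z'ne hyz hy'z' ey.symm ez.symm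
  rw [e1, e4]
  exact hx'z'
end

section
/- If θ : V(D₂) → V(D₁) is a compression map between reflexive directed graphs and D₁ is balanced, then D₂ is balanced. -/
theorem stmt2 {V₂ V₁ : Type*} (A₂ : V₂ → V₂ → Prop) (A₁ : V₁ → V₁ → Prop)
    (θ : V₂ → V₁) (h₂ : Reflexive' A₂) (h₁ : Reflexive' A₁)
    (hθ : IsCompression A₂ A₁ θ) (hb : BalancedGraph A₁) :
    BalancedGraph A₂ := by
  obtain ⟨hsurj, hmap, hlift, hneq, hinj, hliftA⟩ := hθ
  intro w x y z hwx hxy hyz hwz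
  have h1 := hb (θ w) (θ x) (θ y) (θ z) (hmap _ _ hwx) (hmap _ _ hxy)
    (hmap _ _ hyz) (hmap _ _ hwz)
  constructor
  · intro hwy
    by_cases hxy' : x = y
    · subst hxy'; exact hyz
    by_cases hyz' : y = z
    · subst hyz'; exact hxy
    have hxz1 : A₁ (θ x) (θ z) := h1.mp (hmap _ _ hwy)
    obtain ⟨p, q, r, ⟨hpq, hqr, hpr⟩, hp, hq, hr⟩ :=
      hlift (θ x) (θ y) (θ z) ⟨hmap _ _ hxy, hmap _ _ hyz, hxz1⟩
    have hθxy : θ x ≠ θ y := hneq _ _ hxy' hxy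
    have hθyz : θ y ≠ θ z := hneq _ _ hyz' hyz
    have hpq' : p ≠ q := by rintro rfl; exact hθxy (hp.symm.trans hq)
    have hqr' : q ≠ r := by rintro rfl; exact hθyz (hq.symm.trans hr)
    obtain ⟨e1, -⟩ := hinj p q x y hpq' hxy' hpq hxy hp hq
    obtain ⟨-, e2⟩ := hinj q r y z hqr' hyz' hqr hyz hq hr
    rw [← e1, ← e2]; exact hpr
  · intro hxz
    by_cases hwx' : w = x
    · subst hwx'; exact hxy
    by_cases hxy' : x = y
    · subst hxy'; exact hwx
    have hwy1 : A₁ (θ w) (θ y) := h1.mpr (hmap _ _ hxz)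
    obtain ⟨p, q, r, ⟨hpq, hqr, hpr⟩, hp, hq, hr⟩ :=
      hlift (θ w) (θ x) (θ y) ⟨hmap _ _ hwx, hmap _ _ hxy, hwy1⟩
    have hθwx : θ w ≠ θ x := hneq _ _ hwx' hwx
    have hθxy : θ x ≠ θ y := hneq _ _ hxy' hxy
    have hpq' : p ≠ q := by rintro rfl; exact hθwx (hp.symm.trans hq)
    have hqr' : q ≠ r := by rintro rfl; exact hθxy (hq.symm.trans hr)
    obtain ⟨e1, -⟩ := hinj p q w x hpq' hwx' hpq hwx hp hq
    obtain ⟨-, e2⟩ := hinj q r x y hqr' hxy' hqr hxy hq hr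
    rw [← e1, ← e2]; exact hpr
end

section
/- If θ : V(D₂) → V(D₁) is a compression map between reflexive directed graphs and D₁ is stable, then D₂ is stable. -/
theorem stmt3 {V₂ V₁ : Type*} (A₂ : V₂ → V₂ → Prop) (A₁ : V₁ → V₁ → Prop)
    (θ : V₂ → V₁) (h₂ : Reflexive' A₂) (h₁ : Reflexive' A₁)
    (hθ : IsCompression A₂ A₁ θ) (hs : Stable A₁) :
    Stable A₂ := by
  obtain ⟨hsur, hpres, hlift, hne, hinj, hcolift⟩ := hθ
  obtain ⟨hbal, hstab⟩ := hs
  -- pinning lemma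
  have pin : ∀ u v u' v', u ≠ v → A₂ u v → A₂ u' v' → θ u' = θ u → θ v' = θ v →
      u' = u ∧ v' = v := by
    intro u v u' v' huv h h' e1 e2
    have hne' : u' ≠ v' := by
      intro hh
      exact hne u v huv h (by rw [← e1, ← e2, hh])
    have := hinj u' v' u v hne' huv h' h e1 e2
    exact this
  have key : ∀ u v w, u ≠ v → v ≠ w → A₂ u v → A₂ v w → A₁ (θ u) (θ w) → A₂ u w := by
    intro u v w huv hvw hA1 hA2 hA3
    obtain ⟨p, q, r, ⟨t1, t2, t3⟩, e1, e2, e3⟩ :=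
      hlift _ _ _ ⟨hpres _ _ hA1, hpres _ _ hA2, hA3⟩
    obtain ⟨e4, e5⟩ := pin u v p q huv hA1 t1 e1 e2
    obtain ⟨-, e6⟩ := pin v w q r hvw hA2 t2 (by rw [e5]) e3
    rw [← e4, ← e6]
    exact t3
  constructor
  · intro w x y z hwx hxy hyz hwz
    constructor
    · intro hwy
      by_cases hxz : x = z
      · subst hxz; exact h₂ x
      by_cases hxy' : x = y
      · subst hxy'; exact hyz
      by_cases hyz' : y = z
      · subst hyz'; exact hxy
      have hbd : A₁ (θ x) (θ z) :=
        (hbal (θ w) (θ x) (θ y) (θ z) (hpres _ _ hwx) (hpres _ _ hxy)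
          (hpres _ _ hyz) (hpres _ _ hwz)).mp (hpres _ _ hwy)
      exact key x y z hxy' hyz' hxy hyz hbd
    · intro hxz
      by_cases hwy : w = y
      · subst hwy; exact h₂ w
      by_cases hwx' : w = x
      · subst hwx'; exact hxy
      by_cases hxy' : x = y
      · subst hxy'; exact hwx
      have hbd : A₁ (θ w) (θ y) :=
        (hbal (θ w) (θ x) (θ y) (θ z) (hpres _ _ hwx) (hpres _ _ hxy)
          (hpres _ _ hyz) (hpres _ _ hwz)).mpr (hpres _ _ hxz)
      exact key w x y hwx' hxy' hwx hxy hbd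
  · intro a b c d hab hac had hbc hbd hcd hAab hAac hAbc hAbd hAcd
    have hA1 : A₁ (θ a) (θ d) := by
      by_cases h : θ a = θ d
      · rw [h]; exact h₁ (θ d)
      · exact hstab (θ a) (θ b) (θ c) (θ d)
          (hne a b hab hAab) (hne a c hac hAac) h
          (hne b c hbc hAbc) (hne b d hbd hAbd) (hne c d hcd hAcd)
          (hpres _ _ hAab) (hpres _ _ hAac) (hpres _ _ hAbc)
          (hpres _ _ hAbd) (hpres _ _ hAcd)
    exact key a b d hab hbd hAab hAbd hA1
end

section
/- In a stable reflexive directed graph D, every clasp is a soloist: if x is a clasp, then there is no vertex r ≠ x with both rx ∈ A(D) and xr ∈ A(D). -/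
theorem stmt4 {V : Type*} (A : V → V → Prop) (hr : Reflexive' A)
    (hs : Stable A) (x : V) (hx : IsClasp A x) :
    Soloist A x := by
  obtain ⟨w, y, hwx, hyx, hAwx, hAxy, hnwy⟩ := hx
  obtain ⟨hbal, hstab⟩ := hs
  rintro r hrx ⟨hArx, hAxr⟩
  -- Balance on (w, x, r, x): A w x, A x r, A r x, A w x ⇒ (A w r ↔ A x x)
  have hAwr : A w r := (hbal w x r x hAwx hAxr hArx hAwx).mpr (hr x)
  -- Balance on (x, r, x, y): A x r, A r x, A x y, A x y ⇒ (A x x ↔ A r y)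
  have hAry : A r y := (hbal x r x y hAxr hArx hAxy hAxy).mp (hr x)
  by_cases hwy : w = y
  · exact hnwy (hwy ▸ hr w)
  by_cases hrw : r = w
  · exact hnwy (hrw ▸ hAry)
  by_cases hry : r = y
  · exact hnwy (hry ▸ hAwr)
  exact hnwy (hstab w r x y (Ne.symm hrw) hwx hwy hrx hry (fun h => hyx h.symm)
    hAwr hAwx hArx hAry hAxy)
end

section
/- Let D be a stable reflexive directed graph, s a soloist, and suppose (a, b, s) is a transitive triple with a, b ∈ V(D)∖{s}, a ≠ b. If sc ∈ A(D) for some vertex c, then ac ∈ A(D) if and only if bc ∈ A(D). -/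
theorem stmt5 {V : Type*} (A : V → V → Prop) (hr : Reflexive' A)
    (hs : Stable A) (s : V) (hsol : Soloist A s)
    (a b : V) (ha : a ≠ s) (hb : b ≠ s) (hab : a ≠ b)
    (ht : TransTriple A a b s) (c : V) (hsc : A s c) :
    A a c ↔ A b c := by
  obtain ⟨hab', hbs, has⟩ := ht
  constructor
  · intro hac
    exact (hs.1 a b s c hab' hbs hsc hac).mp has
  · intro hbc
    by_cases hca : c = a
    · subst hca; exact hr c
    by_cases hcb : c = b
    · subst hcb; exact hab'
    by_cases hcs : c = s
    · subst hcs; exact has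
    exact hs.2 a b s c hab ha (fun h => hca h.symm) hb (fun h => hcb h.symm)
      (fun h => hcs h.symm) hab' has hbs hbc hsc
end

section
/- Let D be a stable reflexive directed graph, s a soloist, and suppose (a, b, s) is a transitive triple with a, b ∈ V(D)∖{s}, a ≠ b. If xa ∈ A(D) for some vertex x, then xs ∈ A(D) if and only if xb ∈ A(D). -/
theorem stmt6 {V : Type*} (A : V → V → Prop) (hr : Reflexive' A)
    (hs : Stable A) (s : V) (hsol : Soloist A s)
    (a b : V) (ha : a ≠ s) (hb : b ≠ s) (hab : a ≠ b)
    (ht : TransTriple A a b s) (x : V) (hxa : A x a) :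
    A x s ↔ A x b := by
  obtain ⟨hAab, hAbs, hAas⟩ := ht
  obtain ⟨hbal, hstab⟩ := hs
  constructor
  · intro hxs
    exact (hbal x a b s hxa hAab hAbs hxs).mpr hAas
  · intro hxb
    by_cases hxs : x = s
    · exact absurd ⟨hxs ▸ hAas, hxs ▸ hxa⟩ (hsol a ha)
    by_cases hxa' : x = a
    · exact hxa' ▸ hAas
    by_cases hxb' : x = b
    · exact hxb' ▸ hAbs
    exact hstab x a b s hxa' hxb' hxs hab ha hb hxa hxb hAab hAas hAbs
end

section
/- Let D be a stable reflexive directed graph, s a soloist, and suppose (a, s, c) is a transitive triple with a, c ∈ V(D)∖{s}. Then a ≠ c, and for any vertex x with xa ∈ A(D), one has xc ∈ A(D) if and only if xs ∈ A(D). -/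
theorem stmt7 {V : Type*} (A : V → V → Prop) (hr : Reflexive' A)
    (hs : Stable A) (s : V) (hsol : Soloist A s)
    (a c : V) (ha : a ≠ s) (hc : c ≠ s)
    (ht : TransTriple A a s c) :
    a ≠ c ∧ ∀ x : V, A x a → (A x c ↔ A x s) := by
  obtain ⟨has, hsc, hac⟩ := ht
  have hane : a ≠ c := by
    rintro rfl
    exact hsol a ha ⟨has, hsc⟩
  refine ⟨hane, fun x hxa => ⟨fun hxc => ?_, fun hxs => ?_⟩⟩
  · exact (hs.1 x a s c hxa has hsc hxc).mpr hac
  · by_cases hxs' : x = s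
    · subst hxs'; exact absurd ⟨has, hxa⟩ (hsol a ha)
    · by_cases hxa' : x = a
      · subst hxa'; exact hac
      · by_cases hxc' : x = c
        · subst hxc'; exact hr x
        · exact hs.2 x a s c hxa' hxs' hxc' ha hane hc.symm hxa hxs has hac hsc
end

section
/- Let D be a stable reflexive directed graph, s a soloist, and suppose (a, s, c) is a transitive triple with a, c ∈ V(D)∖{s}. If cd ∈ A(D) for some vertex d, then ad ∈ A(D) if and only if sd ∈ A(D). -/
theorem stmt8 {V : Type*} (A : V → V → Prop) (hr : Reflexive' A)
    (hs : Stable A) (s : V) (hsol : Soloist A s)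
    (a c : V) (ha : a ≠ s) (hc : c ≠ s)
    (ht : TransTriple A a s c) (d : V) (hcd : A c d) :
    A a d ↔ A s d := by
  obtain ⟨has, hsc, hac⟩ := ht
  have hacne : a ≠ c := by
    rintro rfl
    exact hsol a ha ⟨has, hsc⟩
  constructor
  · intro had
    exact ((hs.1 a s c d has hsc hcd had).mp hac)
  · intro hsd
    by_cases hds : d = s
    · subst hds; exact has
    by_cases hda : d = a
    · exact absurd ⟨has, hda ▸ hsd⟩ (hsol a ha)
    by_cases hdc : d = c
    · subst hdc; exact hac
    exact hs.2 a s c d ha hacne (fun h => hda h.symm) (Ne.symm hc)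
      (fun h => hds h.symm) (fun h => hdc h.symm) has hac hsc hsd hcd
end

section
/- Let D be a stable reflexive directed graph, s a soloist, and suppose (s, b, c) is a transitive triple with b, c ∈ V(D)∖{s}, b ≠ c. If cd ∈ A(D) for some vertex d, then bd ∈ A(D) if and only if sd ∈ A(D). -/
theorem stmt9 {V : Type*} (A : V → V → Prop) (hr : Reflexive' A)
    (hs : Stable A) (s : V) (hsol : Soloist A s)
    (b c : V) (hb : b ≠ s) (hc : c ≠ s) (hbc : b ≠ c)
    (ht : TransTriple A s b c) (d : V) (hcd : A c d) :
    A b d ↔ A s d := by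
  obtain ⟨hsb, hbcA, hsc⟩ := ht
  obtain ⟨hbal, hstab⟩ := hs
  by_cases hds : d = s
  · subst hds
    exact absurd ⟨hcd, hsc⟩ (hsol c hc)
  by_cases hdb : d = b
  · subst hdb; exact ⟨fun _ => hsb, fun _ => hr d⟩
  by_cases hdc : d = c
  · subst hdc; exact ⟨fun _ => hsc, fun _ => hbcA⟩
  constructor
  · intro hbd
    exact hstab s b c d (Ne.symm hb) (Ne.symm hc) (fun h => hds h.symm)
      hbc (fun h => hdb h.symm) (fun h => hdc h.symm) hsb hsc hbcA hbd hcd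
  · intro hsd
    exact (hbal s b c d hsb hbcA hcd hsd).mp hsc
end

section
/- Let D be a stable reflexive directed graph, s a soloist, and suppose (s, b, c) is a transitive triple with b, c ∈ V(D)∖{s}, b ≠ c. If as ∈ A(D) for some vertex a, then ab ∈ A(D) if and only if ac ∈ A(D). -/
theorem stmt10 {V : Type*} (A : V → V → Prop) (hr : Reflexive' A)
    (hs : Stable A) (s : V) (hsol : Soloist A s)
    (b c : V) (hb : b ≠ s) (hc : c ≠ s) (hbc : b ≠ c)
    (ht : TransTriple A s b c) (a : V) (has : A a s) :
    A a b ↔ A a c := by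
  obtain ⟨hsb, hbcA, hsc⟩ := ht
  constructor
  · intro hab
    by_cases h1 : a = s
    · subst h1; exact hsc
    by_cases h2 : a = b
    · subst h2; exact hbcA
    by_cases h3 : a = c
    · subst h3; exact hr a
    exact hs.2 a s b c h1 h2 h3 (Ne.symm hb) (Ne.symm hc) hbc has hab hsb hsc hbcA
  · intro hac
    exact (hs.1 a s b c has hsb hbcA hac).mpr hsc
end

section
/- Let θ : V(D₂) → V(D) be a compression map of reflexive directed graphs. If x ∈ V(D₂) is a locked clasp, then θ(x) is a locked clasp in D. -/
theorem stmt11 {V₂ V : Type*} (A₂ : V₂ → V₂ → Prop) (A : V → V → Prop)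
    (θ : V₂ → V) (h₂ : Reflexive' A₂) (h₁ : Reflexive' A)
    (hθ : IsCompression A₂ A θ) (x : V₂) (hx : IsLockedClasp A₂ x) :
    IsLockedClasp A (θ x) := by
  obtain ⟨u, v, w, y, hu, hv, hw, hy, ⟨hux, hxy, huy⟩, ⟨hux', hxv, huv⟩, ⟨hwx, hxv', hwv⟩, hwy⟩ := hx
  obtain ⟨hsurj, hpres, hlift, hinj, hbij, hrev⟩ := hθ
  refine ⟨θ u, θ v, θ w, θ y, hinj u x hu hux, (hinj x v hv.symm hxv).symm,
    hinj w x hw hwx, (hinj x y hy.symm hxy).symm,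
    ⟨hpres _ _ hux, hpres _ _ hxy, hpres _ _ huy⟩,
    ⟨hpres _ _ hux', hpres _ _ hxv, hpres _ _ huv⟩,
    ⟨hpres _ _ hwx, hpres _ _ hxv', hpres _ _ hwv⟩, ?_⟩
  intro hA
  obtain ⟨a, b, c, ⟨hab, hbc, hac⟩, ha, hb, hc⟩ :=
    hlift (θ w) (θ x) (θ y) ⟨hpres _ _ hwx, hpres _ _ hxy, hA⟩
  have hwx' : θ w ≠ θ x := hinj w x hw hwx
  have hxy' : θ x ≠ θ y := hinj x y hy.symm hxy
  have hab' : a ≠ b := fun h => hwx' (by rw [← ha, ← hb, h])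
  have hbc' : b ≠ c := fun h => hxy' (by rw [← hb, ← hc, h])
  obtain ⟨haw, hbx⟩ := hbij a b w x hab' hw hab hwx (ha.trans rfl) hb
  obtain ⟨hbx', hcy⟩ := hbij b c x y hbc' hy.symm hbc hxy hb hc
  rw [haw, hcy] at hac
  exact hwy hac
end

section
/- Let θ : V(D₂) → V(D) be a compression map of reflexive directed graphs. If x₁ ∈ V(D) is a locked clasp, then D₂ contains a locked clasp. -/
theorem stmt12 {V₂ V : Type*} (A₂ : V₂ → V₂ → Prop) (A : V → V → Prop)
    (θ : V₂ → V) (h₂ : Reflexive' A₂) (h₁ : Reflexive' A)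
    (hθ : IsCompression A₂ A θ) (x₁ : V) (hx : IsLockedClasp A x₁) :
    ∃ x₂ : V₂, IsLockedClasp A₂ x₂ := by
  obtain ⟨u, v, w, y, hu, hv, hw, hy, T1, T2, T3, hwy⟩ := hx
  obtain ⟨surj, pres, lift, inj1, bij, ex⟩ := hθ
  obtain ⟨u2, x2, y2, Tuxy, hu2, hx2, hy2⟩ := lift u x₁ y T1
  obtain ⟨u2', x2', v2, Tuxv, hu2', hx2', hv2⟩ := lift u x₁ v T2
  obtain ⟨w2, x2'', v2', Twxv, hw2, hx2'', hv2'⟩ := lift w x₁ v T3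
  have hux : u2 ≠ x2 := fun h => hu (by rw [← hu2, h, hx2])
  have hux' : u2' ≠ x2' := fun h => hu (by rw [← hu2', h, hx2'])
  have hxv : x2' ≠ v2 := fun h => hv (by rw [← hv2, ← h, hx2'])
  have hxv' : x2'' ≠ v2' := fun h => hv (by rw [← hv2', ← h, hx2''])
  obtain ⟨e1, e2⟩ := bij u2 x2 u2' x2' hux hux' Tuxy.1 Tuxv.1
    (by rw [hu2, hu2']) (by rw [hx2, hx2'])
  obtain ⟨e3, e4⟩ := bij x2' v2 x2'' v2' hxv hxv' Tuxv.2.1 Twxv.2.1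
    (by rw [hx2', hx2'']) (by rw [hv2, hv2'])
  subst e1; subst e4
  rw [← e2] at Tuxv hxv
  rw [← e3, ← e2] at Twxv hx2''
  refine ⟨x2, u2, v2, w2, y2, ?_, ?_, ?_, ?_, Tuxy, Tuxv, Twxv, ?_⟩
  · exact hux
  · exact fun h => hv (by rw [← hv2, h, hx2])
  · exact fun h => hw (by rw [← hw2, h, hx2])
  · exact fun h => hy (by rw [← hy2, h, hx2])
  · intro h
    exact hwy (by rw [← hw2, ← hy2]; exact pres _ _ h)
end

section
/- If a reflexive directed graph D contains a locked clasp, then D is not the compression of any preordered directed graph; i.e., there is no compression map θ : V(D₂) → V(D) with D₂ preordered. -/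
theorem stmt13 {V : Type*} (A : V → V → Prop) (hr : Reflexive' A)
    (hx : ∃ x : V, IsLockedClasp A x) :
    ∀ (V₂ : Type*) (A₂ : V₂ → V₂ → Prop) (θ : V₂ → V),
      Preordered A₂ → ¬ IsCompression A₂ A θ := by
  obtain ⟨x, u, v, w, y, hu, hv, hw, hy, ⟨hux, hxy, huy⟩, ⟨_, hxv, huv⟩, ⟨hwx, _, hwv⟩, hny⟩ := hx
  intro V₂ A₂ θ ⟨_, htrans⟩ ⟨_, harr, hlift, hinj, hbij, _⟩
  obtain ⟨u₁, x₁, y₁, ⟨hA1, hA2, _⟩, e1, e2, e3⟩ := hlift u x y ⟨hux, hxy, huy⟩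
  obtain ⟨u₂, x₂, v₂, ⟨hB1, hB2, _⟩, f1, f2, f3⟩ := hlift u x v ⟨hux, hxv, huv⟩
  obtain ⟨w₃, x₃, v₃, ⟨hC1, hC2, _⟩, g1, g2, g3⟩ := hlift w x v ⟨hwx, hxv, hwv⟩
  have hne1 : u₁ ≠ x₁ := fun h => hu (by rw [← e1, h, e2])
  have hne2 : u₂ ≠ x₂ := fun h => hu (by rw [← f1, h, f2])
  have hne3 : x₂ ≠ v₂ := fun h => hv (by rw [← f3, ← h, f2])
  have hne4 : x₃ ≠ v₃ := fun h => hv (by rw [← g3, ← h, g2])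
  obtain ⟨_, hx12⟩ := hbij u₁ x₁ u₂ x₂ hne1 hne2 hA1 hB1 (e1.trans f1.symm) (e2.trans f2.symm)
  obtain ⟨hx23, _⟩ := hbij x₂ v₂ x₃ v₃ hne3 hne4 hB2 hC2 (f2.trans g2.symm) (f3.trans g3.symm)
  have : A₂ w₃ y₁ := htrans w₃ x₃ y₁ hC1 (by rw [← hx23, ← hx12]; exact hA2)
  exact hny (g1 ▸ e3 ▸ harr _ _ this)
end

section
/- Let D be a stable reflexive directed graph on a finite vertex set in which every clasp is unlocked. Then there exists a preordered directed graph D' and a compression map θ : V(D') → V(D). Conversely, if a stable directed graph D is the compression of a preordered directed graph, then every clasp in D is unlocked. -/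
namespace Stmt19Aux

variable {V : Type} (A : V → V → Prop)

/-- `w` is an in-neighbour, `v` an out-neighbour of `x`, and `(w,x,v)` is a transitive
triple (an "edge" of the bipartite slot graph at `x`). -/
def edge (x w v : V) : Prop := w ≠ x ∧ v ≠ x ∧ A w x ∧ A x v ∧ A w v

variable {A}

lemma L1 (h : ∀ x : V, IsClasp A x → ¬ IsLockedClasp A x) {x u y v w : V}
    (h1 : edge A x u y) (h2 : edge A x u v) (h3 : edge A x w v) : edge A x w y := by
  obtain ⟨hu, hy, hux, hxy, huy⟩ := h1
  obtain ⟨-, hv, -, hxv, huv⟩ := h2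
  obtain ⟨hw, -, hwx, -, hwv⟩ := h3
  refine ⟨hw, hy, hwx, hxy, ?_⟩
  by_contra hwy
  exact h x ⟨w, y, hw, hy, hwx, hxy, hwy⟩
    ⟨u, v, w, y, hu, hv, hw, hy, ⟨hux, hxy, huy⟩, ⟨hux, hxv, huv⟩, ⟨hwx, hxv, hwv⟩, hwy⟩

lemma balOut (hb : BalancedGraph A) {x w y z : V} (h1 : edge A x w z)
    (hxy : A x y) (hyx : y ≠ x) (hyz : A y z) : edge A x w y := by
  obtain ⟨hw, hz, hwx, hxz, hwz⟩ := h1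
  exact ⟨hw, hyx, hwx, hxy, (hb w x y z hwx hxy hyz hwz).2 hxz⟩

lemma stOut (hr : Reflexive' A) (hs : Stable A) {x w y z : V}
    (h1 : edge A x w y) (hyz : A y z) (hxz : A x z) (hzx : z ≠ x) : edge A x w z := by
  obtain ⟨hw, hy, hwx, hxy, hwy⟩ := h1
  refine ⟨hw, hzx, hwx, hxz, ?_⟩
  by_cases hyz' : y = z
  · exact hyz' ▸ hwy
  by_cases hwy' : w = y
  · exact hwy' ▸ hyz
  by_cases hwz' : w = z
  · exact hwz' ▸ hr z
  exact hs.2 w x y z hw hwy' hwz' (Ne.symm hy) (Ne.symm hzx) hyz' hwx hwy hxy hxz hyz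

lemma balIn (hb : BalancedGraph A) {z x y v : V} (h1 : edge A z x v)
    (hxy : A x y) (hyz : A y z) (hyz' : y ≠ z) : edge A z y v := by
  obtain ⟨hx, hv, hxz, hzv, hxv⟩ := h1
  exact ⟨hyz', hv, hyz, hzv, (hb x y z v hxy hyz hzv hxv).1 hxz⟩

lemma stIn (hr : Reflexive' A) (hs : Stable A) {z x y v : V} (h1 : edge A z y v)
    (hxy : A x y) (hxz : A x z) (hxz' : x ≠ z) : edge A z x v := by
  obtain ⟨hy, hv, hyz, hzv, hyv⟩ := h1
  refine ⟨hxz', hv, hxz, hzv, ?_⟩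
  by_cases hxy' : x = y
  · exact hxy' ▸ hyv
  by_cases hxv' : x = v
  · exact hxv' ▸ hr v
  by_cases hyv' : y = v
  · exact hyv' ▸ hxy
  exact hs.2 x y z v hxy' hxz' hxv' hy hyv' (Ne.symm hv) hxy hxz hyz hyv hzv

/-- Slot equivalence at `x`: slots in the same biclique component of the bipartite
slot graph, with all in-isolated slots grouped together, likewise out-isolated. -/
def ES (x : V) (s t : Option (V ⊕ V)) : Prop :=
  s = t ∨
  (∃ w w', s = some (Sum.inl w) ∧ t = some (Sum.inl w') ∧
    w ≠ x ∧ A w x ∧ w' ≠ x ∧ A w' x ∧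
    (((∀ v, ¬ edge A x w v) ∧ (∀ v, ¬ edge A x w' v)) ∨ ∃ v, edge A x w v ∧ edge A x w' v)) ∨
  (∃ v v', s = some (Sum.inr v) ∧ t = some (Sum.inr v') ∧
    v ≠ x ∧ A x v ∧ v' ≠ x ∧ A x v' ∧
    (((∀ w, ¬ edge A x w v) ∧ (∀ w, ¬ edge A x w v')) ∨ ∃ w, edge A x w v ∧ edge A x w v')) ∨
  (∃ w v, s = some (Sum.inl w) ∧ t = some (Sum.inr v) ∧ edge A x w v) ∨
  (∃ w v, s = some (Sum.inr v) ∧ t = some (Sum.inl w) ∧ edge A x w v)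

lemma ES_symm {x : V} {s t : Option (V ⊕ V)} (h : ES (A := A) x s t) : ES (A := A) x t s := by
  rcases h with h | ⟨w, w', hs, ht, h1, h2, h3, h4, h5⟩ | ⟨v, v', hs, ht, h1, h2, h3, h4, h5⟩ |
    ⟨w, v, hs, ht, h⟩ | ⟨w, v, hs, ht, h⟩
  · exact Or.inl h.symm
  · refine Or.inr (Or.inl ⟨w', w, ht, hs, h3, h4, h1, h2, ?_⟩)
    rcases h5 with ⟨a, b⟩ | ⟨v, a, b⟩
    exacts [Or.inl ⟨b, a⟩, Or.inr ⟨v, b, a⟩]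
  · refine Or.inr (Or.inr (Or.inl ⟨v', v, ht, hs, h3, h4, h1, h2, ?_⟩))
    rcases h5 with ⟨a, b⟩ | ⟨w, a, b⟩
    exacts [Or.inl ⟨b, a⟩, Or.inr ⟨w, b, a⟩]
  · exact Or.inr (Or.inr (Or.inr (Or.inr ⟨w, v, ht, hs, h⟩)))
  · exact Or.inr (Or.inr (Or.inr (Or.inl ⟨w, v, ht, hs, h⟩)))

lemma edge_validIn {x w v : V} (h : edge A x w v) : w ≠ x ∧ A w x := ⟨h.1, h.2.2.1⟩
lemma edge_validOut {x w v : V} (h : edge A x w v) : v ≠ x ∧ A x v := ⟨h.2.1, h.2.2.2.1⟩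

lemma ES_trans (h : ∀ x : V, IsClasp A x → ¬ IsLockedClasp A x) {x : V}
    {s t u : Option (V ⊕ V)} (h1 : ES (A := A) x s t) (h2 : ES (A := A) x t u) :
    ES (A := A) x s u := by
  rcases eq_or_ne t u with rfl | htu
  · exact h1
  rcases eq_or_ne s t with rfl | hst
  · exact h2
  rcases h1 with h1e | ⟨w, w', hs, ht, hw, hwx, hw', hwx', hc⟩ |
      ⟨v, v', hs, ht, hv, hxv, hv', hxv', hc⟩ | ⟨w, v, hs, ht, he⟩ | ⟨w, v, hs, ht, he⟩
  · exact absurd h1e hst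
  -- case A : s = inl w, t = inl w'
  · subst hs ht
    rcases h2 with h2e | ⟨a, a', hs2, ht2, ha, hax, ha', hax', hc2⟩ |
        ⟨b, b', hs2, ht2, hb, hxb, hb', hxb', hc2⟩ | ⟨a, b, hs2, ht2, he2⟩ |
        ⟨a, b, hs2, ht2, he2⟩
    · exact absurd h2e htu
    · obtain rfl : a = w' := by simpa using hs2.symm
      subst ht2
      refine Or.inr (Or.inl ⟨w, a', rfl, rfl, hw, hwx, ha', hax', ?_⟩)
      rcases hc with ⟨i1, i2⟩ | ⟨v0, e1, e2⟩
      · rcases hc2 with ⟨j1, j2⟩ | ⟨v2, f1, f2⟩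
        · exact Or.inl ⟨i1, j2⟩
        · exact absurd f1 (i2 v2)
      · rcases hc2 with ⟨j1, j2⟩ | ⟨v2, f1, f2⟩
        · exact absurd e2 (j1 v0)
        · exact Or.inr ⟨v2, L1 h f1 e2 e1, f2⟩
    · simp at hs2
    · obtain rfl : a = w' := by simpa using hs2.symm
      subst ht2
      refine Or.inr (Or.inr (Or.inr (Or.inl ⟨w, b, rfl, rfl, ?_⟩)))
      rcases hc with ⟨i1, i2⟩ | ⟨v0, e1, e2⟩
      · exact absurd he2 (i2 b)
      · exact L1 h he2 e2 e1
    · simp at hs2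
  -- case B : s = inr v, t = inr v'
  · subst hs ht
    rcases h2 with h2e | ⟨a, a', hs2, ht2, ha, hax, ha', hax', hc2⟩ |
        ⟨b, b', hs2, ht2, hb, hxb, hb', hxb', hc2⟩ | ⟨a, b, hs2, ht2, he2⟩ |
        ⟨a, b, hs2, ht2, he2⟩
    · exact absurd h2e htu
    · simp at hs2
    · obtain rfl : b = v' := by simpa using hs2.symm
      subst ht2
      refine Or.inr (Or.inr (Or.inl ⟨v, b', rfl, rfl, hv, hxv, hb', hxb', ?_⟩))
      rcases hc with ⟨i1, i2⟩ | ⟨w0, e1, e2⟩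
      · rcases hc2 with ⟨j1, j2⟩ | ⟨w2, f1, f2⟩
        · exact Or.inl ⟨i1, j2⟩
        · exact absurd f1 (i2 w2)
      · rcases hc2 with ⟨j1, j2⟩ | ⟨w2, f1, f2⟩
        · exact absurd e2 (j1 w0)
        · exact Or.inr ⟨w0, e1, L1 h f2 f1 e2⟩
    · simp at hs2
    · obtain rfl : b = v' := by simpa using hs2.symm
      subst ht2
      refine Or.inr (Or.inr (Or.inr (Or.inr ⟨a, v, rfl, rfl, ?_⟩)))
      rcases hc with ⟨i1, i2⟩ | ⟨w0, e1, e2⟩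
      · exact absurd he2 (i2 a)
      · exact L1 h e1 e2 he2
  -- case C : s = inl w, t = inr v, edge w v
  · subst hs ht
    rcases h2 with h2e | ⟨a, a', hs2, ht2, ha, hax, ha', hax', hc2⟩ |
        ⟨b, b', hs2, ht2, hb, hxb, hb', hxb', hc2⟩ | ⟨a, b, hs2, ht2, he2⟩ |
        ⟨a, b, hs2, ht2, he2⟩
    · exact absurd h2e htu
    · simp at hs2
    · obtain rfl : b = v := by simpa using hs2.symm
      subst ht2
      refine Or.inr (Or.inr (Or.inr (Or.inl ⟨w, b', rfl, rfl, ?_⟩)))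
      rcases hc2 with ⟨j1, j2⟩ | ⟨w2, f1, f2⟩
      · exact absurd he (j1 w)
      · exact L1 h f2 f1 he
    · simp at hs2
    · obtain rfl : b = v := by simpa using hs2.symm
      subst ht2
      exact Or.inr (Or.inl ⟨w, a, rfl, rfl, he.1, he.2.2.1, he2.1, he2.2.2.1,
        Or.inr ⟨b, he, he2⟩⟩)
  -- case D : s = inr v, t = inl w, edge w v
  · subst hs ht
    rcases h2 with h2e | ⟨a, a', hs2, ht2, ha, hax, ha', hax', hc2⟩ |
        ⟨b, b', hs2, ht2, hb, hxb, hb', hxb', hc2⟩ | ⟨a, b, hs2, ht2, he2⟩ |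
        ⟨a, b, hs2, ht2, he2⟩
    · exact absurd h2e htu
    · obtain rfl : a = w := by simpa using hs2.symm
      subst ht2
      refine Or.inr (Or.inr (Or.inr (Or.inr ⟨a', v, rfl, rfl, ?_⟩)))
      rcases hc2 with ⟨j1, j2⟩ | ⟨v2, f1, f2⟩
      · exact absurd he (j1 v)
      · exact L1 h he f1 f2
    · simp at hs2
    · obtain rfl : a = w := by simpa using hs2.symm
      subst ht2
      exact Or.inr (Or.inr (Or.inl ⟨v, b, rfl, rfl, he.2.1, he.2.2.2.1, he2.2.1, he2.2.2.2.1,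
        Or.inr ⟨a, he, he2⟩⟩))
    · simp at hs2

lemma ES_inl_inr {x w v : V} (hh : ES (A := A) x (some (Sum.inl w)) (some (Sum.inr v))) :
    edge A x w v := by
  rcases hh with he | ⟨a, a', h1, h2, -⟩ | ⟨b, b', h1, h2, -⟩ | ⟨a, b, h1, h2, he⟩ |
    ⟨a, b, h1, h2, he⟩
  · simp at he
  · simp at h2
  · simp at h1
  · obtain rfl : a = w := by simpa using h1.symm
    obtain rfl : b = v := by simpa using h2.symm
    exact he
  · simp at h1

lemma ES_out (hr : Reflexive' A) (hs : Stable A) {x y z : V}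
    (hxy : A x y) (hxz : A x z) (hyz : A y z) (hyx : y ≠ x) (hzx : z ≠ x) :
    ES (A := A) x (some (Sum.inr y)) (some (Sum.inr z)) := by
  by_cases hyz' : y = z
  · exact Or.inl (by rw [hyz'])
  refine Or.inr (Or.inr (Or.inl ⟨y, z, rfl, rfl, hyx, hxy, hzx, hxz, ?_⟩))
  by_cases hex : ∃ w, edge A x w z
  · obtain ⟨w, hw⟩ := hex
    exact Or.inr ⟨w, balOut hs.1 hw hxy hyx hyz, hw⟩
  · exact Or.inl ⟨fun w hw => hex ⟨w, stOut hr hs hw hyz hxz hzx⟩, fun w hw => hex ⟨w, hw⟩⟩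

lemma ES_in (hr : Reflexive' A) (hs : Stable A) {z x y : V}
    (hxy : A x y) (hxz : A x z) (hyz : A y z) (hxz' : x ≠ z) (hyz' : y ≠ z) :
    ES (A := A) z (some (Sum.inl x)) (some (Sum.inl y)) := by
  by_cases hxy' : x = y
  · exact Or.inl (by rw [hxy'])
  refine Or.inr (Or.inl ⟨x, y, rfl, rfl, hxz', hxz, hyz', hyz, ?_⟩)
  by_cases hex : ∃ v, edge A z x v
  · obtain ⟨v, hv⟩ := hex
    exact Or.inr ⟨v, hv, balIn hs.1 hv hxy hyz hyz'⟩
  · exact Or.inl ⟨fun v hv => hex ⟨v, hv⟩, fun v hv => hex ⟨v, stIn hr hs hv hxy hxz hxz'⟩⟩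

variable (A)

/-- The setoid merging slot-copies within the same biclique component. -/
def SV (h : ∀ x : V, IsClasp A x → ¬ IsLockedClasp A x) : Setoid (V × Option (V ⊕ V)) where
  r p q := p.1 = q.1 ∧ ES (A := A) p.1 p.2 q.2
  iseqv := by
    refine ⟨fun p => ⟨rfl, Or.inl rfl⟩, ?_, ?_⟩
    · rintro p q ⟨h1, h2⟩
      exact ⟨h1.symm, h1 ▸ ES_symm h2⟩
    · rintro p q r ⟨h1, h2⟩ ⟨h3, h4⟩
      exact ⟨h1.trans h3, ES_trans h h2 (h1 ▸ h4)⟩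

/-- The arrow relation lifted piece of `A'` between genuinely distinct vertices. -/
def R (p q : V × Option (V ⊕ V)) : Prop :=
  p.1 ≠ q.1 ∧ A p.1 q.1 ∧ ES (A := A) p.1 p.2 (some (Sum.inr q.1)) ∧
    ES (A := A) q.1 q.2 (some (Sum.inl p.1))

end Stmt19Aux

open Stmt19Aux in
theorem stmt19 {V : Type} [Finite V] (A : V → V → Prop)
    (hr : Reflexive' A) (hs : Stable A) :
    ((∀ x : V, IsClasp A x → ¬ IsLockedClasp A x) →
      ∃ (V' : Type) (_ : Finite V') (A' : V' → V' → Prop) (θ : V' → V),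
        Preordered A' ∧ IsCompression A' A θ) ∧
    (∀ (V₂ : Type) (A₂ : V₂ → V₂ → Prop) (θ : V₂ → V),
      Preordered A₂ → IsCompression A₂ A θ →
      ∀ x : V, IsClasp A x → ¬ IsLockedClasp A x) := by
  constructor
  · -- forward direction
    intro h
    classical
    haveI : Finite (Option (V ⊕ V)) :=
      Finite.of_equiv ((V ⊕ V) ⊕ PUnit.{1}) (Equiv.optionEquivSumPUnit (V ⊕ V)).symm
    set S : Setoid (V × Option (V ⊕ V)) := SV A h with hS
    refine ⟨Quotient S, Quotient.finite S,
      (fun u v => u = v ∨ ∃ p q, u = Quotient.mk S p ∧ v = Quotient.mk S q ∧ R A p q),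
      Quotient.lift (·.1) (fun p q hpq => hpq.1), ⟨fun v => Or.inl rfl, ?_⟩, ?_, ?_, ?_, ?_, ?_, ?_⟩
    · -- transitivity of A'
      intro a b c hab hbc
      rcases hab with rfl | ⟨p, q, rfl, rfl, hpq⟩
      · exact hbc
      rcases hbc with heq | ⟨p', q', hb1, rfl, hp'q'⟩
      · exact heq ▸ Or.inr ⟨p, q, rfl, rfl, hpq⟩
      have hqp' : S.r q p' := Quotient.exact hb1
      obtain ⟨hq1, hq2⟩ := hqp'
      obtain ⟨hxy, hAxy, hpo, hqi⟩ := hpq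
      obtain ⟨hyz, hAyz, hp'o, hq'i⟩ := hp'q'
      have hp'o' : ES (A := A) q.1 p'.2 (some (Sum.inr q'.1)) := by rw [hq1]; exact hp'o
      have hq'i' : ES (A := A) q'.1 q'.2 (some (Sum.inl q.1)) := by rw [hq1]; exact hq'i
      have hedge : edge A q.1 p.1 q'.1 :=
        ES_inl_inr (ES_trans h (ES_symm hqi) (ES_trans h hq2 hp'o'))
      obtain ⟨hxy', hzy', hAxy2, hAyz2, hAxz⟩ := hedge
      by_cases hxz : p.1 = q'.1
      · refine Or.inl (Quotient.sound ⟨hxz, ?_⟩)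
        have hyx : A q.1 p.1 := by rw [hxz]; exact hAyz2
        have hmid : ES (A := A) p.1 (some (Sum.inr q.1)) (some (Sum.inl q.1)) :=
          Or.inr (Or.inr (Or.inr (Or.inr ⟨q.1, q.1, rfl, rfl,
            Ne.symm hxy, Ne.symm hxy, hyx, hAxy, hr q.1⟩)))
        have hq'i'' : ES (A := A) p.1 q'.2 (some (Sum.inl q.1)) := by rw [hxz]; exact hq'i'
        exact ES_trans h hpo (ES_trans h hmid (ES_symm hq'i''))
      · have hAyz' : A q.1 q'.1 := by rw [hq1]; exact hAyz
        refine Or.inr ⟨p, q', rfl, rfl, hxz, hAxz, ?_, ?_⟩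
        · exact ES_trans h hpo (ES_out hr hs hAxy hAxz hAyz' (Ne.symm hxy) (Ne.symm hxz))
        · exact ES_trans h hq'i' (ES_symm (ES_in hr hs hAxy hAxz hAyz' hxz (Ne.symm hzy')))
    · -- surjectivity
      exact fun x => ⟨Quotient.mk S (x, none), rfl⟩
    · -- arrows preserved
      rintro u v (rfl | ⟨p, q, rfl, rfl, hpq⟩)
      · exact hr _
      · exact hpq.2.1
    · -- transitive triples lift
      rintro a b c ⟨hab, hbc, hac⟩
      by_cases h1 : a = b
      · subst h1
        by_cases h2 : a = c
        · subst h2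
          exact ⟨Quotient.mk S (a, none), Quotient.mk S (a, none), Quotient.mk S (a, none),
            ⟨Or.inl rfl, Or.inl rfl, Or.inl rfl⟩, rfl, rfl, rfl⟩
        · refine ⟨Quotient.mk S (a, some (Sum.inr c)), Quotient.mk S (a, some (Sum.inr c)),
            Quotient.mk S (c, some (Sum.inl a)), ⟨Or.inl rfl, ?_, ?_⟩, rfl, rfl, rfl⟩ <;>
          exact Or.inr ⟨(a, some (Sum.inr c)), (c, some (Sum.inl a)), rfl, rfl,
            h2, hac, Or.inl rfl, Or.inl rfl⟩
      by_cases h2 : b = c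
      · subst h2
        refine ⟨Quotient.mk S (a, some (Sum.inr b)), Quotient.mk S (b, some (Sum.inl a)),
          Quotient.mk S (b, some (Sum.inl a)), ⟨?_, Or.inl rfl, ?_⟩, rfl, rfl, rfl⟩ <;>
        exact Or.inr ⟨(a, some (Sum.inr b)), (b, some (Sum.inl a)), rfl, rfl,
          h1, hab, Or.inl rfl, Or.inl rfl⟩
      by_cases h3 : a = c
      · subst h3
        have hba : A b a := hbc
        refine ⟨Quotient.mk S (a, some (Sum.inr b)), Quotient.mk S (b, some (Sum.inl a)),
          Quotient.mk S (a, some (Sum.inl b)), ⟨?_, ?_, ?_⟩, rfl, rfl, rfl⟩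
        · exact Or.inr ⟨(a, some (Sum.inr b)), (b, some (Sum.inl a)), rfl, rfl,
            h1, hab, Or.inl rfl, Or.inl rfl⟩
        · have hes : ES (A := A) b (some (Sum.inl a)) (some (Sum.inr a)) :=
            Or.inr (Or.inr (Or.inr (Or.inl ⟨a, a, rfl, rfl, h1, h1, hab, hba, hr a⟩)))
          exact Or.inr ⟨(b, some (Sum.inl a)), (a, some (Sum.inl b)), rfl, rfl,
            Ne.symm h1, hba, hes, Or.inl rfl⟩
        · refine Or.inl (Quotient.sound ⟨rfl, ?_⟩)
          exact Or.inr (Or.inr (Or.inr (Or.inr ⟨b, b, rfl, rfl,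
            Ne.symm h1, Ne.symm h1, hba, hab, hr b⟩)))
      · refine ⟨Quotient.mk S (a, some (Sum.inr b)), Quotient.mk S (b, some (Sum.inl a)),
          Quotient.mk S (c, some (Sum.inl b)), ⟨?_, ?_, ?_⟩, rfl, rfl, rfl⟩
        · exact Or.inr ⟨(a, some (Sum.inr b)), (b, some (Sum.inl a)), rfl, rfl,
            h1, hab, Or.inl rfl, Or.inl rfl⟩
        · have hes : ES (A := A) b (some (Sum.inl a)) (some (Sum.inr c)) :=
            Or.inr (Or.inr (Or.inr (Or.inl ⟨a, c, rfl, rfl,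
              ⟨h1, Ne.symm h2, hab, hbc, hac⟩⟩)))
          exact Or.inr ⟨(b, some (Sum.inl a)), (c, some (Sum.inl b)), rfl, rfl,
            h2, hbc, hes, Or.inl rfl⟩
        · exact Or.inr ⟨(a, some (Sum.inr b)), (c, some (Sum.inl b)), rfl, rfl,
            h3, hac, ES_out hr hs hab hac hbc (Ne.symm h1) (Ne.symm h3),
            ES_symm (ES_in hr hs hab hac hbc h3 h2)⟩
    · -- distinct vertices map to distinct
      rintro u v huv (rfl | ⟨p, q, rfl, rfl, hpq⟩)
      · exact absurd rfl huv
      · exact hpq.1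
    · -- injectivity on arrows
      rintro u v u' v' huv hu'v' (rfl | ⟨p, q, rfl, rfl, hpq⟩) hA2
      · exact absurd rfl huv
      rcases hA2 with rfl | ⟨p', q', rfl, rfl, hp'q'⟩
      · exact absurd rfl hu'v'
      intro hθ1 hθ2
      obtain ⟨hpq1, hApq, hpo, hqi⟩ := hpq
      obtain ⟨hp'q'1, hAp'q', hp'o, hq'i⟩ := hp'q'
      have e1 : p.1 = p'.1 := hθ1
      have e2 : q.1 = q'.1 := hθ2
      constructor
      · refine Quotient.sound ⟨e1, ES_trans h hpo ?_⟩
        rw [e2]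
        rw [e1] at hpo ⊢
        exact ES_symm (e2 ▸ hp'o)
      · refine Quotient.sound ⟨e2, ES_trans h hqi ?_⟩
        rw [e1]
        rw [e2] at hqi ⊢
        exact ES_symm (e1 ▸ hq'i)
    · -- arrows between distinct vertices lift
      intro a b hab hAab
      refine ⟨Quotient.mk S (a, some (Sum.inr b)), Quotient.mk S (b, some (Sum.inl a)),
        ?_, Or.inr ⟨_, _, rfl, rfl, hab, hAab, Or.inl rfl, Or.inl rfl⟩, rfl, rfl⟩
      intro hcon
      exact hab (Quotient.exact hcon).1
  · -- converse direction
    rintro V₂ A₂ θ ⟨hA2r, hA2t⟩ ⟨hsurj, hpres, hlift, hdist, hinj, hlift2⟩ x hclasp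
    rintro ⟨u, v, w, y, hu, hv, hw, hy, ⟨hux, hxy, huy⟩, ⟨-, hxv, huv⟩, ⟨hwx, -, hwv⟩, hwy⟩
    obtain ⟨u₁, x₁, y₁, ⟨t1a, t1b, t1c⟩, hθu1, hθx1, hθy1⟩ := hlift u x y ⟨hux, hxy, huy⟩
    obtain ⟨u₂, x₂, v₂, ⟨t2a, t2b, t2c⟩, hθu2, hθx2, hθv2⟩ := hlift u x v ⟨hux, hxv, huv⟩
    obtain ⟨w₃, x₃, v₃, ⟨t3a, t3b, t3c⟩, hθw3, hθx3, hθv3⟩ := hlift w x v ⟨hwx, hxv, hwv⟩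
    have hne1 : u₁ ≠ x₁ := fun e => hu (by rw [← hθu1, ← hθx1, e])
    have hne2 : u₂ ≠ x₂ := fun e => hu (by rw [← hθu2, ← hθx2, e])
    have hne3 : x₂ ≠ v₂ := fun e => hv (by rw [← hθv2, ← hθx2, e])
    have hne4 : x₃ ≠ v₃ := fun e => hv (by rw [← hθv3, ← hθx3, e])
    obtain ⟨-, hx12⟩ := hinj u₁ x₁ u₂ x₂ hne1 hne2 t1a t2a
      (by rw [hθu1, hθu2]) (by rw [hθx1, hθx2])
    obtain ⟨hx23, -⟩ := hinj x₂ v₂ x₃ v₃ hne3 hne4 t2b t3b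
      (by rw [hθx2, hθx3]) (by rw [hθv2, hθv3])
    have hxy3 : A₂ x₃ y₁ := by rw [← hx23, ← hx12]; exact t1b
    have : A₂ w₃ y₁ := hA2t w₃ x₃ y₁ t3a hxy3
    exact hwy (by rw [← hθw3, ← hθy1]; exact hpres _ _ this)
end
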